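/- If Y₀ and Y₁ take values in a finite set L of nonnegative reals, then the probability-of-causation weighted sum dominates the difference of means: Σ_{y ∈ L} y · P(Y₀ ≠ y and Y₁ = y) ≥ E[Y₁] − E[Y₀]. -/

import Mathlib

open MeasureTheory ProbabilityTheory

lemma integral_eq_sum_of_finset_range
    {Ω : Type*} [MeasurableSpace Ω]
    (μ : Measure Ω) [IsProbabilityMeasure μ]
    (L : Finset ℝ) (f : Ω → ℝ) (hfm : Measurable f) (hfL : ∀ ω, f ω ∈ L) :
    (∫ ω, f ω ∂μ) = ∑ y ∈ L, y * (μ {ω | f ω = y}).toReal := by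
  have hrw : ∀ ω, f ω = ∑ y ∈ L, Set.indicator {ω' | f ω' = y} (fun _ => y) ω := by
    intro ω
    have : ∀ y ∈ L, Set.indicator {ω' | f ω' = y} (fun _ => y) ω
        = if f ω = y then y else 0 := by
      intro y _
      by_cases h : f ω = y
      · simp [Set.indicator, h]
      · simp [Set.indicator, h]
    rw [Finset.sum_congr rfl this, Finset.sum_ite_eq L (f ω) (fun y => y)]
    simp [hfL ω]
  calc (∫ ω, f ω ∂μ)
      = ∫ ω, ∑ y ∈ L, Set.indicator {ω' | f ω' = y} (fun _ => y) ω ∂μ := by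
        exact integral_congr_ae (Filter.Eventually.of_forall hrw)
    _ = ∑ y ∈ L, ∫ ω, Set.indicator {ω' | f ω' = y} (fun _ => y) ω ∂μ := by
        apply integral_finset_sum
        intro y _
        exact (integrable_const y).indicator (hfm (measurableSet_singleton y))
    _ = ∑ y ∈ L, y * (μ {ω | f ω = y}).toReal := by
        apply Finset.sum_congr rfl
        intro y _
        have hms : MeasurableSet {ω' | f ω' = y} := hfm (measurableSet_singleton y)
        rw [integral_indicator_const y hms]
        simp [mul_comm, Measure.real]

/-- If `Y₀` and `Y₁` take values in a finite set `L` of nonnegative reals, then the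
probability-of-causation weighted sum dominates the difference of means:
`Σ_{y ∈ L} y · P(Y₀ ≠ y ∧ Y₁ = y) ≥ E[Y₁] − E[Y₀]`. -/
theorem poc_weighted_sum_ge_mean_difference
    {Ω : Type*} [MeasurableSpace Ω]
    (μ : Measure Ω) [IsProbabilityMeasure μ]
    (L : Finset ℝ) (hL : ∀ x ∈ L, 0 ≤ x)
    (Y1 Y0 : Ω → ℝ) (hY1m : Measurable Y1) (hY0m : Measurable Y0)
    (hY1L : ∀ ω, Y1 ω ∈ L) (hY0L : ∀ ω, Y0 ω ∈ L) :
    (∫ ω, Y1 ω ∂μ) - (∫ ω, Y0 ω ∂μ)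
      ≤ ∑ y ∈ L, y * (μ {ω | Y0 ω ≠ y ∧ Y1 ω = y}).toReal := by
  rw [integral_eq_sum_of_finset_range μ L Y1 hY1m hY1L,
      integral_eq_sum_of_finset_range μ L Y0 hY0m hY0L,
      ← Finset.sum_sub_distrib]
  apply Finset.sum_le_sum
  intro y hy
  rw [← mul_sub]
  apply mul_le_mul_of_nonneg_left _ (hL y hy)
  -- suffices: μ{Y1=y}.toReal - μ{Y0=y}.toReal ≤ μ{Y0≠y ∧ Y1=y}.toReal
  have hsub : {ω | Y1 ω = y} ⊆ {ω | Y0 ω ≠ y ∧ Y1 ω = y} ∪ {ω | Y0 ω = y} := by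
    intro ω hω
    by_cases h : Y0 ω = y
    · exact Or.inr h
    · exact Or.inl ⟨h, hω⟩
  have hle : μ {ω | Y1 ω = y} ≤ μ {ω | Y0 ω ≠ y ∧ Y1 ω = y} + μ {ω | Y0 ω = y} :=
    le_trans (measure_mono hsub) (measure_union_le _ _)
  have h1 : μ {ω | Y1 ω = y} ≠ ⊤ := measure_ne_top μ _
  have h2 : μ {ω | Y0 ω ≠ y ∧ Y1 ω = y} ≠ ⊤ := measure_ne_top μ _
  have h3 : μ {ω | Y0 ω = y} ≠ ⊤ := measure_ne_top μ _
  have := ENNReal.toReal_mono (by simp [ENNReal.add_ne_top, h2, h3]) hle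
  rw [ENNReal.toReal_add h2 h3] at this
  linarith
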